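/- Let ν > 0 and let g : ℝ → ℝ be continuous with compact support. Define θ₀(y) = exp(−(1/(2ν)) ∫₀^y g(s) ds) and, for x ∈ ℝ and t > 0, u(x,t) = [∫_{-∞}^{∞} ((x−y)/t) e^{−(x−y)²/(4νt)} θ₀(y) dy] / [∫_{-∞}^{∞} e^{−(x−y)²/(4νt)} θ₀(y) dy]. Then u satisfies the viscous Burgers equation ∂u/∂t (x,t) + u(x,t) ∂u/∂x (x,t) = ν ∂²u/∂x² (x,t) for all x ∈ ℝ and t > 0. -/

import Mathlib

open Set MeasureTheory Real


lemma HC_pow_bound (n : ℕ) {c : ℝ} (hc : 0 < c) (z : ℝ) :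
    |z| ^ n * Real.exp (-c * z ^ 2) ≤
      (1 + n.factorial * (2 / c) ^ n) * Real.exp (-(c / 2) * z ^ 2) := by
  have h2 : (z ^ 2) ^ n ≤ n.factorial * (2 / c) ^ n * Real.exp ((c / 2) * z ^ 2) := by
    have h := Real.pow_div_factorial_le_exp (x := (c / 2) * z ^ 2) (by positivity) n
    rw [div_le_iff₀ (by positivity : (0:ℝ) < n.factorial)] at h
    have hne : ((c / 2) * z ^ 2) ^ n = (c / 2) ^ n * (z ^ 2) ^ n := by ring
    rw [hne] at h
    have hcpos : (0:ℝ) < (c / 2) ^ n := by positivity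
    rw [show (n.factorial : ℝ) * (2 / c) ^ n * Real.exp ((c / 2) * z ^ 2)
        = (Real.exp ((c / 2) * z ^ 2) * n.factorial) / (c / 2) ^ n by
      rw [div_pow, div_pow]; field_simp]
    rw [le_div_iff₀ hcpos]; linarith
  have h3 : |z| ^ n ≤ 1 + (z ^ 2) ^ n := by
    rcases le_total |z| 1 with h | h
    · have := pow_le_one₀ (abs_nonneg z) h (n := n); linarith [pow_nonneg (sq_nonneg z) n]
    · have h5 : |z| ^ n ≤ |z| ^ (2 * n) := pow_le_pow_right₀ h (by omega)
      have h4 : |z| ^ (2 * n) = (z ^ 2) ^ n := by rw [pow_mul, sq_abs]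
      linarith
  have hE : (0:ℝ) < Real.exp (-c * z ^ 2) := Real.exp_pos _
  have h1 : Real.exp (-c * z ^ 2) ≤ Real.exp (-(c / 2) * z ^ 2) := by
    apply Real.exp_le_exp.2; nlinarith [sq_nonneg z]
  calc |z| ^ n * Real.exp (-c * z ^ 2) ≤ (1 + (z ^ 2) ^ n) * Real.exp (-c * z ^ 2) :=
        mul_le_mul_of_nonneg_right h3 hE.le
    _ ≤ Real.exp (-(c/2) * z ^ 2) + (z ^ 2) ^ n * Real.exp (-c * z ^ 2) := by
        nlinarith [pow_nonneg (sq_nonneg z) n]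
    _ ≤ (1 + n.factorial * (2 / c) ^ n) * Real.exp (-(c / 2) * z ^ 2) := by
        have h5 : (z ^ 2) ^ n * Real.exp (-c * z ^ 2)
            ≤ n.factorial * (2 / c) ^ n * Real.exp ((c / 2) * z ^ 2) * Real.exp (-c * z ^ 2) :=
          mul_le_mul_of_nonneg_right h2 hE.le
        rw [mul_assoc, ← Real.exp_add] at h5
        rw [show (c / 2) * z ^ 2 + (-c * z ^ 2) = -(c / 2) * z ^ 2 by ring] at h5
        nlinarith [Real.exp_pos (-(c / 2) * z ^ 2)]

lemma HC_integrable_gauss {c : ℝ} (hc : 0 < c) (x : ℝ) :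
    Integrable (fun y : ℝ => Real.exp (-c * (x - y) ^ 2)) :=
  (integrable_exp_neg_mul_sq hc).comp_sub_left x

lemma HC_integrable_poly_gauss (n : ℕ) {c : ℝ} (hc : 0 < c) (x : ℝ) :
    Integrable (fun y : ℝ => |x - y| ^ n * Real.exp (-c * (x - y) ^ 2)) := by
  apply Integrable.mono' ((HC_integrable_gauss (half_pos hc) x).const_mul
    (1 + n.factorial * (2 / c) ^ n))
  · exact (by fun_prop : Continuous fun y : ℝ =>
      |x - y| ^ n * Real.exp (-c * (x - y) ^ 2)).aestronglyMeasurable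
  · filter_upwards with y
    rw [Real.norm_eq_abs, abs_of_nonneg (by positivity)]
    exact HC_pow_bound n hc (x - y)

lemma HC_shift {c : ℝ} (hc : 0 < c) {x x' y : ℝ} (h : |x' - x| < 1) :
    Real.exp (-(c / 2) * (x' - y) ^ 2) ≤ Real.exp (c / 2) * Real.exp (-(c / 4) * (x - y) ^ 2) := by
  rw [← Real.exp_add]
  apply Real.exp_le_exp.2
  have h1 : (x' - x) ^ 2 ≤ 1 := by
    have := abs_nonneg (x' - x)
    nlinarith [sq_abs (x' - x)]
  nlinarith [sq_nonneg ((x - x') - (x' - y)), sq_nonneg (x' - y)]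


noncomputable def HCK (ν : ℝ) (θ₀ : ℝ → ℝ) (n : ℕ) (x t : ℝ) : ℝ :=
  ∫ y : ℝ, (x - y) ^ n * Real.exp (-(x - y) ^ 2 / (4 * ν * t)) * θ₀ y

section
variable {ν : ℝ} {θ₀ : ℝ → ℝ} {M : ℝ}
  (hν : 0 < ν) (hθc : Continuous θ₀) (hθM : ∀ y, |θ₀ y| ≤ M)

lemma HC_exp_eq (ν t x y : ℝ) :
    Real.exp (-(x - y) ^ 2 / (4 * ν * t)) = Real.exp (-(1 / (4 * ν * t)) * (x - y) ^ 2) := by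
  ring_nf

include hν hθc hθM in
lemma HCK_integrand_integrable (n : ℕ) (x : ℝ) {t : ℝ} (ht : 0 < t) :
    Integrable (fun y : ℝ => (x - y) ^ n * Real.exp (-(x - y) ^ 2 / (4 * ν * t)) * θ₀ y) := by
  have hc : 0 < 1 / (4 * ν * t) := by positivity
  apply Integrable.mono' ((HC_integrable_poly_gauss n hc x).const_mul M)
  · exact (by fun_prop : Continuous fun y : ℝ =>
      (x - y) ^ n * Real.exp (-(x - y) ^ 2 / (4 * ν * t)) * θ₀ y).aestronglyMeasurable
  · filter_upwards with y
    rw [Real.norm_eq_abs, abs_mul, abs_mul, abs_pow, HC_exp_eq,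
      Real.abs_exp]
    calc |x - y| ^ n * Real.exp (-(1 / (4 * ν * t)) * (x - y) ^ 2) * |θ₀ y|
        ≤ |x - y| ^ n * Real.exp (-(1 / (4 * ν * t)) * (x - y) ^ 2) * M :=
          mul_le_mul_of_nonneg_left (hθM y) (by positivity)
      _ = M * (|x - y| ^ n * Real.exp (-(1 / (4 * ν * t)) * (x - y) ^ 2)) := by ring


include hν hθc hθM in
lemma HCK_hasDerivAt_x (n : ℕ) {t : ℝ} (ht : 0 < t) (x : ℝ) :
    HasDerivAt (fun x' => HCK ν θ₀ n x' t)
      ((n : ℝ) * HCK ν θ₀ (n - 1) x t - HCK ν θ₀ (n + 1) x t / (2 * ν * t)) x := by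
  have hM : 0 ≤ M := (abs_nonneg _).trans (hθM 0)
  have hc : 0 < 1 / (4 * ν * t) := by positivity
  set c : ℝ := 1 / (4 * ν * t) with hcdef
  set C1 : ℝ := 1 + (n - 1).factorial * (2 / c) ^ (n - 1) with hC1
  set C2 : ℝ := 1 + (n + 1).factorial * (2 / c) ^ (n + 1) with hC2
  have hC1p : 0 < C1 := by positivity
  have hC2p : 0 < C2 := by positivity
  have key := hasDerivAt_integral_of_dominated_loc_of_deriv_le (μ := volume) (x₀ := x)
    (F := fun x' y => (x' - y) ^ n * Real.exp (-(x' - y) ^ 2 / (4 * ν * t)) * θ₀ y)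
    (F' := fun x' y => ((n : ℝ) * (x' - y) ^ (n - 1) - (x' - y) ^ (n + 1) / (2 * ν * t)) *
      Real.exp (-(x' - y) ^ 2 / (4 * ν * t)) * θ₀ y)
    (bound := fun y => M * ((n * C1 + C2 / (2 * ν * t)) * Real.exp (c / 2)) *
      Real.exp (-(c / 4) * (x - y) ^ 2))
    (s := Metric.ball x 1) (Metric.ball_mem_nhds x one_pos)
    (Filter.Eventually.of_forall fun x' => (Continuous.aestronglyMeasurable (by fun_prop)))
    (HCK_integrand_integrable hν hθc hθM n x ht)
    (Continuous.aestronglyMeasurable (by fun_prop))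
    ?_ ?_ ?_
  · have heq : (∫ y : ℝ, ((n : ℝ) * (x - y) ^ (n - 1) - (x - y) ^ (n + 1) / (2 * ν * t)) *
        Real.exp (-(x - y) ^ 2 / (4 * ν * t)) * θ₀ y)
        = (n : ℝ) * HCK ν θ₀ (n - 1) x t - HCK ν θ₀ (n + 1) x t / (2 * ν * t) := by
      have e1 : (fun y : ℝ => ((n : ℝ) * (x - y) ^ (n - 1) - (x - y) ^ (n + 1) / (2 * ν * t)) *
          Real.exp (-(x - y) ^ 2 / (4 * ν * t)) * θ₀ y)
          = fun y : ℝ => (n : ℝ) * ((x - y) ^ (n - 1) * Real.exp (-(x - y) ^ 2 / (4 * ν * t)) * θ₀ y)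
            - (1 / (2 * ν * t)) * ((x - y) ^ (n + 1) * Real.exp (-(x - y) ^ 2 / (4 * ν * t)) * θ₀ y) := by
        funext y; ring
      rw [e1, integral_sub (((HCK_integrand_integrable hν hθc hθM (n-1) x ht).const_mul _))
        (((HCK_integrand_integrable hν hθc hθM (n+1) x ht).const_mul _)),
        integral_const_mul, integral_const_mul]
      rw [HCK, HCK]; ring
    rw [heq] at key
    exact key.2
  · -- bound
    filter_upwards with y
    intro x' hx'
    rw [Metric.mem_ball, Real.dist_eq] at hx'
    rw [Real.norm_eq_abs, abs_mul, abs_mul, Real.abs_exp, HC_exp_eq]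
    have hz1 : |(n : ℝ) * (x' - y) ^ (n - 1) - (x' - y) ^ (n + 1) / (2 * ν * t)|
        ≤ (n : ℝ) * |x' - y| ^ (n - 1) + |x' - y| ^ (n + 1) / (2 * ν * t) := by
      refine (abs_sub _ _).trans ?_
      rw [abs_mul, abs_div, abs_pow, abs_pow, Nat.abs_cast, abs_of_pos (by positivity : (0:ℝ) < 2 * ν * t)]
    have hb1 : |x' - y| ^ (n - 1) * Real.exp (-c * (x' - y) ^ 2)
        ≤ C1 * Real.exp (-(c / 2) * (x' - y) ^ 2) := HC_pow_bound (n - 1) hc _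
    have hb2 : |x' - y| ^ (n + 1) * Real.exp (-c * (x' - y) ^ 2)
        ≤ C2 * Real.exp (-(c / 2) * (x' - y) ^ 2) := HC_pow_bound (n + 1) hc _
    have hsh : Real.exp (-(c / 2) * (x' - y) ^ 2)
        ≤ Real.exp (c / 2) * Real.exp (-(c / 4) * (x - y) ^ 2) := HC_shift hc hx'
    have hEp : (0:ℝ) < Real.exp (-c * (x' - y) ^ 2) := Real.exp_pos _
    have hE2 : (0:ℝ) < Real.exp (-(c / 2) * (x' - y) ^ 2) := Real.exp_pos _
    calc |(n : ℝ) * (x' - y) ^ (n - 1) - (x' - y) ^ (n + 1) / (2 * ν * t)| *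
          Real.exp (-c * (x' - y) ^ 2) * |θ₀ y|
        ≤ (((n : ℝ) * |x' - y| ^ (n - 1) + |x' - y| ^ (n + 1) / (2 * ν * t)) *
            Real.exp (-c * (x' - y) ^ 2)) * M := by
          apply mul_le_mul (mul_le_mul_of_nonneg_right hz1 hEp.le) (hθM y) (abs_nonneg _)
          positivity
      _ = M * ((n : ℝ) * (|x' - y| ^ (n - 1) * Real.exp (-c * (x' - y) ^ 2))
            + (1 / (2 * ν * t)) * (|x' - y| ^ (n + 1) * Real.exp (-c * (x' - y) ^ 2))) := by ring
      _ ≤ M * ((n : ℝ) * (C1 * Real.exp (-(c / 2) * (x' - y) ^ 2))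
            + (1 / (2 * ν * t)) * (C2 * Real.exp (-(c / 2) * (x' - y) ^ 2))) := by
          apply mul_le_mul_of_nonneg_left _ hM
          have h2νt : (0:ℝ) < 1 / (2 * ν * t) := by positivity
          gcongr
      _ = M * ((n * C1 + C2 / (2 * ν * t)) * Real.exp (-(c / 2) * (x' - y) ^ 2)) := by ring
      _ ≤ M * ((n * C1 + C2 / (2 * ν * t)) * Real.exp (c / 2)) * Real.exp (-(c / 4) * (x - y) ^ 2) := by
          have hcoef : (0:ℝ) ≤ n * C1 + C2 / (2 * ν * t) := by positivity
          calc M * ((n * C1 + C2 / (2 * ν * t)) * Real.exp (-(c / 2) * (x' - y) ^ 2))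
              ≤ M * ((n * C1 + C2 / (2 * ν * t)) *
                  (Real.exp (c / 2) * Real.exp (-(c / 4) * (x - y) ^ 2))) := by
                apply mul_le_mul_of_nonneg_left (mul_le_mul_of_nonneg_left hsh hcoef) hM
            _ = M * ((n * C1 + C2 / (2 * ν * t)) * Real.exp (c / 2)) *
                  Real.exp (-(c / 4) * (x - y) ^ 2) := by ring
  · exact ((HC_integrable_gauss (by positivity : (0:ℝ) < c / 4) x).const_mul _)
  · -- pointwise differentiability
    filter_upwards with y
    intro x' _
    have h1 : HasDerivAt (fun x'' : ℝ => x'' - y) 1 x' := (hasDerivAt_id x').sub_const y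
    have hpow : HasDerivAt (fun x'' : ℝ => (x'' - y) ^ n)
        ((n : ℝ) * (x' - y) ^ (n - 1) * 1) x' := (hasDerivAt_pow n (x' - y)).comp x' h1
    have hinner : HasDerivAt (fun x'' : ℝ => -(x'' - y) ^ 2 / (4 * ν * t))
        (-(2 * (x' - y) ^ 1 * 1) / (4 * ν * t)) x' := by
      exact ((h1.pow 2).neg.div_const (4 * ν * t))
    have hexp := hinner.exp
    have := (hpow.mul hexp).mul_const (θ₀ y)
    refine this.congr_deriv ?_
    have hνt : (4 : ℝ) * ν * t ≠ 0 := by positivity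
    field_simp
    ring

include hν hθc hθM in
lemma HCK_hasDerivAt_t (n : ℕ) (x : ℝ) {t : ℝ} (ht : 0 < t) :
    HasDerivAt (fun s => HCK ν θ₀ n x s) (HCK ν θ₀ (n + 2) x t / (4 * ν * t ^ 2)) t := by
  have hM : 0 ≤ M := (abs_nonneg _).trans (hθM 0)
  have hc1 : 0 < 1 / (6 * ν * t) := by positivity
  set c1 : ℝ := 1 / (6 * ν * t) with hc1def
  set C : ℝ := 1 + (n + 2).factorial * (2 / c1) ^ (n + 2) with hC
  have hCp : 0 < C := by positivity
  have key := hasDerivAt_integral_of_dominated_loc_of_deriv_le (μ := volume) (x₀ := t)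
    (F := fun s y => (x - y) ^ n * Real.exp (-(x - y) ^ 2 / (4 * ν * s)) * θ₀ y)
    (F' := fun s y => (x - y) ^ (n + 2) / (4 * ν * s ^ 2) *
      Real.exp (-(x - y) ^ 2 / (4 * ν * s)) * θ₀ y)
    (bound := fun y => M / (ν * t ^ 2) * C * Real.exp (-(c1 / 2) * (x - y) ^ 2))
    (s := Metric.ball t (t / 2)) (Metric.ball_mem_nhds t (by positivity))
    (Filter.Eventually.of_forall fun s => (Continuous.aestronglyMeasurable (by fun_prop)))
    (HCK_integrand_integrable hν hθc hθM n x ht)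
    (Continuous.aestronglyMeasurable (by fun_prop))
    ?_ ?_ ?_
  · have heq : (∫ y : ℝ, (x - y) ^ (n + 2) / (4 * ν * t ^ 2) *
        Real.exp (-(x - y) ^ 2 / (4 * ν * t)) * θ₀ y)
        = HCK ν θ₀ (n + 2) x t / (4 * ν * t ^ 2) := by
      have e1 : (fun y : ℝ => (x - y) ^ (n + 2) / (4 * ν * t ^ 2) *
          Real.exp (-(x - y) ^ 2 / (4 * ν * t)) * θ₀ y)
          = fun y : ℝ => (1 / (4 * ν * t ^ 2)) *
            ((x - y) ^ (n + 2) * Real.exp (-(x - y) ^ 2 / (4 * ν * t)) * θ₀ y) := by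
        funext y; ring
      rw [e1, integral_const_mul, HCK]; ring
    rw [heq] at key
    exact key.2
  · -- bound
    filter_upwards with y
    intro s hs
    rw [Metric.mem_ball, Real.dist_eq, abs_lt] at hs
    have hs1 : t / 2 < s := by linarith [hs.1]
    have hs2 : s < 3 * t / 2 := by linarith [hs.2]
    have hsp : 0 < s := lt_trans (by positivity) hs1
    rw [Real.norm_eq_abs, abs_mul, abs_mul, Real.abs_exp, abs_div, abs_pow,
      abs_of_pos (by positivity : (0:ℝ) < 4 * ν * s ^ 2)]
    have hexp : Real.exp (-(x - y) ^ 2 / (4 * ν * s)) ≤ Real.exp (-c1 * (x - y) ^ 2) := by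
      apply Real.exp_le_exp.2
      rw [hc1def]
      rw [div_le_iff₀ (by positivity : (0:ℝ) < 4 * ν * s)]
      have h1 : -(1 / (6 * ν * t)) * (x - y) ^ 2 * (4 * ν * s) =
          -((x - y) ^ 2 * ((4 * ν * s) / (6 * ν * t))) := by ring
      rw [h1]
      have h2 : (4 * ν * s) / (6 * ν * t) ≤ 1 := by
        rw [div_le_one (by positivity)]; nlinarith
      nlinarith [sq_nonneg (x - y)]
    have hcoef : 1 / (4 * ν * s ^ 2) ≤ 1 / (ν * t ^ 2) := by
      apply one_div_le_one_div_of_le (by positivity)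
      nlinarith [mul_pos hν (mul_pos (sub_pos.2 hs1) (show (0:ℝ) < s + t / 2 by linarith))]
    have hb : |x - y| ^ (n + 2) * Real.exp (-c1 * (x - y) ^ 2)
        ≤ C * Real.exp (-(c1 / 2) * (x - y) ^ 2) := HC_pow_bound (n + 2) hc1 _
    calc |x - y| ^ (n + 2) / (4 * ν * s ^ 2) * Real.exp (-(x - y) ^ 2 / (4 * ν * s)) * |θ₀ y|
        ≤ |x - y| ^ (n + 2) / (4 * ν * s ^ 2) * Real.exp (-(x - y) ^ 2 / (4 * ν * s)) * M := by
          apply mul_le_mul_of_nonneg_left (hθM y) (by positivity)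
      _ ≤ |x - y| ^ (n + 2) * (1 / (ν * t ^ 2)) * Real.exp (-c1 * (x - y) ^ 2) * M := by
          have := mul_le_mul (mul_le_mul_of_nonneg_left hcoef
            (by positivity : (0:ℝ) ≤ |x - y| ^ (n + 2))) hexp (Real.exp_pos _).le
            (by positivity)
          calc |x - y| ^ (n + 2) / (4 * ν * s ^ 2) * Real.exp (-(x - y) ^ 2 / (4 * ν * s)) * M
              = (|x - y| ^ (n + 2) * (1 / (4 * ν * s ^ 2)) *
                  Real.exp (-(x - y) ^ 2 / (4 * ν * s))) * M := by ring
            _ ≤ (|x - y| ^ (n + 2) * (1 / (ν * t ^ 2)) * Real.exp (-c1 * (x - y) ^ 2)) * M :=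
                mul_le_mul_of_nonneg_right this hM
      _ = (1 / (ν * t ^ 2)) * M * (|x - y| ^ (n + 2) * Real.exp (-c1 * (x - y) ^ 2)) := by ring
      _ ≤ (1 / (ν * t ^ 2)) * M * (C * Real.exp (-(c1 / 2) * (x - y) ^ 2)) := by
          apply mul_le_mul_of_nonneg_left hb (by positivity)
      _ = M / (ν * t ^ 2) * C * Real.exp (-(c1 / 2) * (x - y) ^ 2) := by ring
  · exact ((HC_integrable_gauss (by positivity : (0:ℝ) < c1 / 2) x).const_mul _)
  · -- pointwise differentiability in s
    filter_upwards with y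
    intro s hs
    rw [Metric.mem_ball, Real.dist_eq, abs_lt] at hs
    have hsp : 0 < s := by linarith [hs.1]
    have hfe : (fun s' : ℝ => -(x - y) ^ 2 / (4 * ν * s'))
        = fun s' : ℝ => (-(x - y) ^ 2 / (4 * ν)) * s'⁻¹ := by
      funext s'; ring
    have hinner : HasDerivAt (fun s' : ℝ => -(x - y) ^ 2 / (4 * ν * s'))
        ((-(x - y) ^ 2 / (4 * ν)) * (-(s ^ 2)⁻¹)) s := by
      rw [hfe]
      exact (hasDerivAt_inv (ne_of_gt hsp)).const_mul _
    have hexp := hinner.exp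
    have h2 := (hexp.const_mul ((x - y) ^ n)).mul_const (θ₀ y)
    have h3 : (fun s' : ℝ => (x - y) ^ n * Real.exp (-(x - y) ^ 2 / (4 * ν * s')) * θ₀ y)
        = fun s' : ℝ => (x - y) ^ n * Real.exp (-(x - y) ^ 2 / (4 * ν * s')) * θ₀ y := rfl
    refine h2.congr_deriv ?_
    have h4 : s ≠ 0 := ne_of_gt hsp
    have h5 : ν ≠ 0 := ne_of_gt hν
    field_simp
    try ring
    try exact Or.inl trivial

end

lemma HCK_pos {ν : ℝ} {θ₀ : ℝ → ℝ} {M : ℝ}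
    (hν : 0 < ν) (hθc : Continuous θ₀) (hθM : ∀ y, |θ₀ y| ≤ M)
    (hθpos : ∀ y, 0 < θ₀ y) (x : ℝ) {t : ℝ} (ht : 0 < t) :
    0 < HCK ν θ₀ 0 x t := by
  rw [HCK, MeasureTheory.integral_pos_iff_support_of_nonneg_ae]
  · have hsupp : Function.support (fun y : ℝ =>
        (x - y) ^ 0 * Real.exp (-(x - y) ^ 2 / (4 * ν * t)) * θ₀ y) = Set.univ := by
      ext y
      simp only [Function.mem_support, Set.mem_univ, iff_true, pow_zero, one_mul]
      exact ne_of_gt (mul_pos (Real.exp_pos _) (hθpos y))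
    rw [hsupp]
    simp
  · filter_upwards with y
    simp only [Pi.zero_apply, pow_zero, one_mul]
    exact le_of_lt (mul_pos (Real.exp_pos _) (hθpos y))
  · exact HCK_integrand_integrable hν hθc hθM 0 x ht

/-- **The Hopf–Cole formula solves the Burgers equation.** For `ν > 0` and `g` continuous
with compact support, the function `u` given by the Hopf–Cole formula satisfies
`u_t + u u_x = ν u_xx` for all `x ∈ ℝ`, `t > 0`. -/
theorem hopf_cole_solution_solves_burgers
    (ν : ℝ) (hν : 0 < ν)
    (g : ℝ → ℝ) (hcont : Continuous g) (hsupp : HasCompactSupport g)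
    (θ₀ : ℝ → ℝ)
    (hθ₀ : ∀ y : ℝ, θ₀ y = Real.exp (-(1 / (2 * ν)) * ∫ s in (0:ℝ)..y, g s))
    (u : ℝ → ℝ → ℝ)
    (hu : ∀ x t : ℝ, 0 < t →
      u x t = (∫ y : ℝ, ((x - y) / t) * Real.exp (-(x - y) ^ 2 / (4 * ν * t)) * θ₀ y) /
              (∫ y : ℝ, Real.exp (-(x - y) ^ 2 / (4 * ν * t)) * θ₀ y)) :
    ∀ x t : ℝ, 0 < t →
      deriv (fun s => u x s) t + u x t * deriv (fun y => u y t) x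
        = ν * deriv (deriv (fun y => u y t)) x := by
  -- properties of θ₀
  have hgi : Integrable g := hcont.integrable_of_hasCompactSupport hsupp
  have hgai : Integrable (fun s => |g s|) := hgi.abs
  set M : ℝ := Real.exp ((1 / (2 * ν)) * ∫ s : ℝ, |g s|) with hM
  have hθfun : θ₀ = fun y => Real.exp (-(1 / (2 * ν)) * ∫ s in (0:ℝ)..y, g s) := funext hθ₀
  have hθc : Continuous θ₀ := by
    rw [hθfun]
    have hprim : Continuous fun y : ℝ => ∫ s in (0:ℝ)..y, g s :=
      intervalIntegral.continuous_primitive (fun a b => hcont.intervalIntegrable a b) 0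
    fun_prop
  have hθpos : ∀ y, 0 < θ₀ y := fun y => by rw [hθ₀]; exact Real.exp_pos _
  have hθM : ∀ y, |θ₀ y| ≤ M := by
    intro y
    have habs : |∫ s in (0:ℝ)..y, g s| ≤ ∫ s : ℝ, |g s| := by
      have key : ∀ a b : ℝ, a ≤ b → |∫ s in a..b, g s| ≤ ∫ s : ℝ, |g s| := by
        intro a b hab
        refine (intervalIntegral.abs_integral_le_integral_abs hab).trans ?_
        rw [intervalIntegral.integral_of_le hab]
        exact setIntegral_le_integral hgai (Filter.Eventually.of_forall fun s => abs_nonneg _)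
      rcases le_total 0 y with h | h
      · exact key 0 y h
      · rw [intervalIntegral.integral_symm, abs_neg]
        exact key y 0 h
    rw [hθ₀, abs_of_pos (Real.exp_pos _), hM, Real.exp_le_exp]
    have h2 : (0:ℝ) < 1 / (2 * ν) := by positivity
    rw [neg_mul]
    calc -(1 / (2 * ν) * ∫ s in (0:ℝ)..y, g s) ≤ 1 / (2 * ν) * |∫ s in (0:ℝ)..y, g s| := by
          rcases abs_cases (∫ s in (0:ℝ)..y, g s) with ⟨h, _⟩ | ⟨h, _⟩ <;> nlinarith
      _ ≤ 1 / (2 * ν) * ∫ s : ℝ, |g s| := mul_le_mul_of_nonneg_left habs h2.le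
  -- rewrite u in terms of HCK
  have hu' : ∀ x t : ℝ, 0 < t →
      u x t = HCK ν θ₀ 1 x t / (t * HCK ν θ₀ 0 x t) := by
    intro x t ht
    rw [hu x t ht]
    have hnum : (∫ y : ℝ, ((x - y) / t) * Real.exp (-(x - y) ^ 2 / (4 * ν * t)) * θ₀ y)
        = (1 / t) * HCK ν θ₀ 1 x t := by
      rw [HCK, ← integral_const_mul]
      congr 1; funext y; ring
    have hden : (∫ y : ℝ, Real.exp (-(x - y) ^ 2 / (4 * ν * t)) * θ₀ y)
        = HCK ν θ₀ 0 x t := by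
      rw [HCK]; congr 1; funext y; rw [pow_zero, one_mul]
    rw [hnum, hden]
    have hKp := HCK_pos hν hθc hθM hθpos x ht
    rw [div_eq_div_iff (ne_of_gt hKp) (ne_of_gt (mul_pos ht hKp))]
    field_simp
  intro x t ht
  have htne : (t : ℝ) ≠ 0 := ne_of_gt ht
  have hνne : ν ≠ 0 := ne_of_gt hν
  -- positivity of K 0 everywhere
  have hKpos : ∀ x' : ℝ, 0 < HCK ν θ₀ 0 x' t := fun x' => HCK_pos hν hθc hθM hθpos x' ht
  -- time derivative
  have hK1t := HCK_hasDerivAt_t hν hθc hθM 1 x ht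
  have hK0t := HCK_hasDerivAt_t hν hθc hθM 0 x ht
  have hdenT : HasDerivAt (fun s => s * HCK ν θ₀ 0 x s)
      (1 * HCK ν θ₀ 0 x t + t * (HCK ν θ₀ (0 + 2) x t / (4 * ν * t ^ 2))) t :=
    (hasDerivAt_id t).mul hK0t
  have hneT : t * HCK ν θ₀ 0 x t ≠ 0 := ne_of_gt (mul_pos ht (hKpos x))
  have hdivT := hK1t.div hdenT hneT
  have hevT : (fun s => u x s) =ᶠ[nhds t] (fun s => HCK ν θ₀ 1 x s / (s * HCK ν θ₀ 0 x s)) := by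
    filter_upwards [eventually_gt_nhds ht] with s hs
    exact hu' x s hs
  have hut : deriv (fun s => u x s) t
      = (HCK ν θ₀ (1 + 2) x t / (4 * ν * t ^ 2) * (t * HCK ν θ₀ 0 x t)
          - HCK ν θ₀ 1 x t * (1 * HCK ν θ₀ 0 x t + t * (HCK ν θ₀ (0 + 2) x t / (4 * ν * t ^ 2))))
        / (t * HCK ν θ₀ 0 x t) ^ 2 := by
    exact (hdivT.congr_of_eventuallyEq hevT).deriv
  -- spatial derivative as a function
  have hXder : ∀ x' : ℝ, HasDerivAt (fun y => u y t)
      (((((1:ℕ):ℝ) * HCK ν θ₀ 0 x' t - HCK ν θ₀ 2 x' t / (2 * ν * t)) * (t * HCK ν θ₀ 0 x' t)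
        - HCK ν θ₀ 1 x' t * (t * (((0:ℕ):ℝ) * HCK ν θ₀ 0 x' t - HCK ν θ₀ 1 x' t / (2 * ν * t))))
        / (t * HCK ν θ₀ 0 x' t) ^ 2) x' := by
    intro x'
    have hfun : (fun y => u y t) = fun y => HCK ν θ₀ 1 y t / (t * HCK ν θ₀ 0 y t) :=
      funext fun y => hu' y t ht
    rw [hfun]
    have h0 := HCK_hasDerivAt_x hν hθc hθM 0 ht x'
    have h1 := HCK_hasDerivAt_x hν hθc hθM 1 ht x'
    have hne' : t * HCK ν θ₀ 0 x' t ≠ 0 := ne_of_gt (mul_pos ht (hKpos x'))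
    exact h1.div (h0.const_mul t) hne'
  have hUxfun : deriv (fun y => u y t) = fun x' =>
      ((((1:ℕ):ℝ) * HCK ν θ₀ 0 x' t - HCK ν θ₀ 2 x' t / (2 * ν * t)) * (t * HCK ν θ₀ 0 x' t)
        - HCK ν θ₀ 1 x' t * (t * (((0:ℕ):ℝ) * HCK ν θ₀ 0 x' t - HCK ν θ₀ 1 x' t / (2 * ν * t))))
        / (t * HCK ν θ₀ 0 x' t) ^ 2 :=
    funext fun x' => (hXder x').deriv
  -- second spatial derivative
  have h0 := HCK_hasDerivAt_x hν hθc hθM 0 ht x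
  have h1 := HCK_hasDerivAt_x hν hθc hθM 1 ht x
  have h2 := HCK_hasDerivAt_x hν hθc hθM 2 ht x
  have hne : t * HCK ν θ₀ 0 x t ≠ 0 := ne_of_gt (mul_pos ht (hKpos x))
  have hA : HasDerivAt (fun x' => ((1:ℕ):ℝ) * HCK ν θ₀ 0 x' t - HCK ν θ₀ 2 x' t / (2 * ν * t))
      (((1:ℕ):ℝ) * (((0:ℕ):ℝ) * HCK ν θ₀ (0-1) x t - HCK ν θ₀ (0+1) x t / (2 * ν * t))
        - (((2:ℕ):ℝ) * HCK ν θ₀ (2-1) x t - HCK ν θ₀ (2+1) x t / (2 * ν * t)) / (2 * ν * t)) x :=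
    (h0.const_mul _).sub (h2.div_const _)
  have hB : HasDerivAt (fun x' => t * HCK ν θ₀ 0 x' t)
      (t * (((0:ℕ):ℝ) * HCK ν θ₀ (0-1) x t - HCK ν θ₀ (0+1) x t / (2 * ν * t))) x :=
    h0.const_mul t
  have hC : HasDerivAt (fun x' => ((0:ℕ):ℝ) * HCK ν θ₀ 0 x' t - HCK ν θ₀ 1 x' t / (2 * ν * t))
      (((0:ℕ):ℝ) * (((0:ℕ):ℝ) * HCK ν θ₀ (0-1) x t - HCK ν θ₀ (0+1) x t / (2 * ν * t))
        - (((1:ℕ):ℝ) * HCK ν θ₀ (1-1) x t - HCK ν θ₀ (1+1) x t / (2 * ν * t)) / (2 * ν * t)) x :=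
    (h0.const_mul _).sub (h1.div_const _)
  have hN := ((hA.mul hB).sub
    (h1.mul (hC.const_mul t)))
  have hDq := hB.pow 2
  have hne2 : (t * HCK ν θ₀ 0 x t) ^ 2 ≠ 0 := pow_ne_zero _ hne
  have hU2 := hN.div hDq hne2
  rw [hut, hUxfun, hu' x t ht]
  erw [hU2.deriv]
  beta_reduce
  simp only [Pi.pow_apply, Pi.mul_apply, Pi.sub_apply, Pi.div_apply]
  have ha := hKpos x
  set a := HCK ν θ₀ 0 x t
  set b := HCK ν θ₀ 1 x t
  set c := HCK ν θ₀ 2 x t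
  set d := HCK ν θ₀ 3 x t
  push_cast
  have hane : a ≠ 0 := ne_of_gt ha
  field_simp
  ring
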